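/- In a graph with unique shortest paths, the intersection of two distinct isometric cycles C and C' is either empty or a single shortest path. -/

import Mathlib

open SimpleGraph

/-- The weight of a walk: sum of its edge weights. -/
def walkWeight {V : Type*} {G : SimpleGraph V} (w : Sym2 V → ℝ) {u v : V}
    (p : G.Walk u v) : ℝ :=
  (p.edges.map w).sum

/-- `p` is a shortest `u`-`v` path with respect to `w`. -/
def IsShortest {V : Type*} (G : SimpleGraph V) (w : Sym2 V → ℝ) {u v : V}
    (p : G.Walk u v) : Prop :=
  p.IsPath ∧ ∀ q : G.Walk u v, q.IsPath → walkWeight w p ≤ walkWeight w q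

/-- Shortest paths in `G` (w.r.t. `w`) are unique between every pair of vertices. -/
def UniqueShortestPaths {V : Type*} (G : SimpleGraph V) (w : Sym2 V → ℝ) : Prop :=
  ∀ (u v : V) (p q : G.Walk u v), IsShortest G w p → IsShortest G w q → p = q

/-- A cycle `c` is isometric: for any two vertices on `c`, some shortest path
between them in `G` is contained in `c`. -/
def IsIsometric {V : Type*} (G : SimpleGraph V) (w : Sym2 V → ℝ) {r : V}
    (c : G.Walk r r) : Prop :=
  ∀ u v : V, u ∈ c.support → v ∈ c.support →
    ∃ p : G.Walk u v, IsShortest G w p ∧ ∀ e ∈ p.edges, e ∈ c.edges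

section Aux
variable {V : Type*} {G : SimpleGraph V}



lemma mem_edges_iff_getVert {u v : V} (p : G.Walk u v) (e : Sym2 V) :
    e ∈ p.edges ↔ ∃ i, i < p.length ∧ e = s(p.getVert i, p.getVert (i+1)) := by
  induction p with
  | nil => simp
  | @cons a b c h q ih =>
    simp only [Walk.edges_cons, List.mem_cons, ih, Walk.length_cons]
    constructor
    · rintro (rfl | ⟨i, hi, rfl⟩)
      · exact ⟨0, by omega, by simp [Walk.getVert_cons_succ]⟩
      · exact ⟨i + 1, by omega, by simp [Walk.getVert_cons_succ]⟩
    · rintro ⟨i, hi, rfl⟩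
      cases i with
      | zero => left; simp [Walk.getVert_cons_succ]
      | succ j => right; exact ⟨j, by omega, by simp [Walk.getVert_cons_succ]⟩

lemma getVert_mem_support' {u v : V} (p : G.Walk u v) (i : ℕ) (hi : i ≤ p.length) :
    p.getVert i ∈ p.support :=
  Walk.mem_support_iff_exists_getVert.2 ⟨i, rfl, hi⟩

lemma indexOf_getVert [DecidableEq V] {u v : V} (p : G.Walk u v) (hp : p.IsPath)
    (k : ℕ) (hk : k ≤ p.length) : p.support.idxOf (p.getVert k) = k := by
  induction p generalizing k with
  | nil =>
    have : k = 0 := by simpa using hk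
    subst this; simp
  | @cons a b c h q ih =>
    rw [Walk.support_cons]
    cases k with
    | zero => simp
    | succ j =>
      rw [Walk.getVert_cons_succ]
      have hq : q.IsPath := hp.of_cons
      have hmem : q.getVert j ∈ q.support := getVert_mem_support' q j (by
        have := hk; rw [Walk.length_cons] at this; omega)
      have hne : q.getVert j ≠ a := by
        rintro rfl
        exact (Walk.cons_isPath_iff h q).1 hp |>.2 hmem
      rw [List.idxOf_cons_ne _ (fun hh => hne hh.symm), ih hq j (by rw [Walk.length_cons] at hk; omega)]

lemma getVert_inj {u v : V} (p : G.Walk u v) (hp : p.IsPath) {i j : ℕ}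
    (hi : i ≤ p.length) (hj : j ≤ p.length) (h : p.getVert i = p.getVert j) : i = j := by
  classical
  have h1 := indexOf_getVert p hp i hi
  rw [h, indexOf_getVert p hp j hj] at h1
  omega

lemma seq_step (n : ℕ) (f : ℕ → ℤ)
    (hstep : ∀ i < n, f (i+1) - f i = 1 ∨ f (i+1) - f i = -1)
    (hinj : ∀ i ≤ n, ∀ j ≤ n, f i = f j → i = j) :
    (∀ i ≤ n, f i = f 0 + i) ∨ (∀ i ≤ n, f i = f 0 - i) := by
  rcases Nat.eq_zero_or_pos n with rfl | hn
  · left; intro i hi; interval_cases i; simp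
  have key : ∀ σ : ℤ, f 1 - f 0 = σ → ∀ i ≤ n, f i = f 0 + σ * i := by
    intro σ hσ i
    induction i using Nat.strong_induction_on with
    | _ i ih =>
      intro hi
      match i with
      | 0 => simp
      | 1 => push_cast; linarith
      | (k+2) =>
        have h1 : f (k+1) = f 0 + σ * (k+1) := ih (k+1) (by omega) (by omega)
        have h0 : f k = f 0 + σ * k := ih k (by omega) (by omega)
        rcases hstep (k+1) (by omega) with h | h <;> rcases hstep k (by omega) with h' | h'
        · have hσ1 : σ = 1 := by rw [h1, h0] at h'; linarith
          push_cast; linarith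
        · exfalso
          have heq : f (k+2) = f k := by linarith
          have := hinj (k+2) (by omega) k (by omega) heq
          omega
        · exfalso
          have heq : f (k+2) = f k := by linarith
          have := hinj (k+2) (by omega) k (by omega) heq
          omega
        · have hσ1 : σ = -1 := by rw [h1, h0] at h'; linarith
          push_cast; linarith
  rcases hstep 0 hn with h | h
  · left
    intro i hi
    simpa using key 1 h i hi
  · right
    intro i hi
    rw [key (-1) h i hi]; ring

lemma walk_in_path [DecidableEq V] {s t u v : V} (L : G.Walk s t) (hL : L.IsPath)
    (R : G.Walk u v) (hR : R.IsPath)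
    (hE : ∀ e ∈ R.edges, e ∈ L.edges) (hu : u ∈ L.support) :
    ∃ σ : ℤ, (σ = 1 ∨ σ = -1) ∧
      ∀ i ≤ R.length, R.getVert i ∈ L.support ∧
        (L.support.idxOf (R.getVert i) : ℤ) = L.support.idxOf u + σ * i := by
  have hedge : ∀ i < R.length, ∃ k, k < L.length ∧
      ((R.getVert i = L.getVert k ∧ R.getVert (i+1) = L.getVert (k+1)) ∨
       (R.getVert i = L.getVert (k+1) ∧ R.getVert (i+1) = L.getVert k)) := by
    intro i hi
    have he : s(R.getVert i, R.getVert (i+1)) ∈ R.edges :=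
      (mem_edges_iff_getVert R _).2 ⟨i, hi, rfl⟩
    obtain ⟨k, hk, hke⟩ := (mem_edges_iff_getVert L _).1 (hE _ he)
    rw [Sym2.eq_iff] at hke
    exact ⟨k, hk, by tauto⟩
  have hmem : ∀ i ≤ R.length, R.getVert i ∈ L.support := by
    intro i hi
    cases i with
    | zero => simpa [Walk.getVert_zero] using hu
    | succ j =>
      obtain ⟨k, hk, hor⟩ := hedge j (by omega)
      rcases hor with ⟨_, h2⟩ | ⟨_, h2⟩
      · rw [h2]; exact getVert_mem_support' L (k+1) (by omega)
      · rw [h2]; exact getVert_mem_support' L k (by omega)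
  set f : ℕ → ℤ := fun i => (L.support.idxOf (R.getVert i) : ℤ) with hf
  have hstep : ∀ i < R.length, f (i+1) - f i = 1 ∨ f (i+1) - f i = -1 := by
    intro i hi
    obtain ⟨k, hk, hor⟩ := hedge i hi
    rcases hor with ⟨h1, h2⟩ | ⟨h1, h2⟩
    · left
      simp only [hf, h1, h2, indexOf_getVert L hL k (by omega),
        indexOf_getVert L hL (k+1) (by omega)]
      push_cast; ring
    · right
      simp only [hf, h1, h2, indexOf_getVert L hL k (by omega),
        indexOf_getVert L hL (k+1) (by omega)]
      push_cast; ring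
  have hinj : ∀ i ≤ R.length, ∀ j ≤ R.length, f i = f j → i = j := by
    intro i hi j hj hij
    simp only [hf, Nat.cast_inj] at hij
    exact getVert_inj R hR hi hj ((List.idxOf_inj (hmem i hi)).1 hij)
  rcases seq_step R.length f hstep hinj with hmono | hmono
  · refine ⟨1, Or.inl rfl, fun i hi => ⟨hmem i hi, ?_⟩⟩
    have := hmono i hi
    simp only [hf, Walk.getVert_zero] at this ⊢
    rw [this]; ring
  · refine ⟨-1, Or.inr rfl, fun i hi => ⟨hmem i hi, ?_⟩⟩
    have := hmono i hi
    simp only [hf, Walk.getVert_zero] at this ⊢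
    rw [this]; ring


lemma edge_decomp {u v : V} (p : G.Walk u v) {e : Sym2 V} (he : e ∈ p.edges) :
    ∃ (a b : V) (hab : G.Adj a b) (w1 : G.Walk u a) (w2 : G.Walk b v),
      e = s(a, b) ∧ p = w1.append (Walk.cons hab w2) := by
  induction p with
  | nil => simp at he
  | @cons x y z h q ih =>
    rw [Walk.edges_cons, List.mem_cons] at he
    rcases he with rfl | he
    · exact ⟨x, y, h, Walk.nil, q, rfl, rfl⟩
    · obtain ⟨a, b, hab, w1, w2, rfl, hq⟩ := ih he
      exact ⟨a, b, hab, Walk.cons h w1, w2, rfl, by rw [hq]; rfl⟩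


lemma mem_support_start_or_edge {u v : V} (p : G.Walk u v) {z : V} (hz : z ∈ p.support) :
    z = u ∨ ∃ e ∈ p.edges, z ∈ e := by
  induction p with
  | nil => simpa using hz
  | @cons a b c h q ih =>
    rw [Walk.support_cons, List.mem_cons] at hz
    rcases hz with rfl | hz
    · exact Or.inl rfl
    · rcases ih hz with rfl | ⟨e, he, hze⟩
      · exact Or.inr ⟨s(a, z), by simp, by simp⟩
      · exact Or.inr ⟨e, by simp [he], hze⟩


lemma mem_walk_support_of_mem_edges {u v : V} (p : G.Walk u v) {e : Sym2 V} {x : V}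
    (he : e ∈ p.edges) (hx : x ∈ e) : x ∈ p.support := by
  induction e using Sym2.ind with
  | _ y z =>
    rcases Sym2.mem_iff.1 hx with rfl | rfl
    · exact p.fst_mem_support_of_mem_edges he
    · exact p.snd_mem_support_of_mem_edges he

lemma key (G : SimpleGraph V) (w : Sym2 V → ℝ)
    (huniq : UniqueShortestPaths G w)
    {r r' : V} (c : G.Walk r r) (c' : G.Walk r' r')
    (hc : c.IsCycle) (hc' : c'.IsCycle)
    (hiso : IsIsometric G w c) (hiso' : IsIsometric G w c')
    {e0 : Sym2 V} (he0c : e0 ∈ c.edges) (he0c' : e0 ∉ c'.edges)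
    (hne : ∃ x, x ∈ c.support ∧ x ∈ c'.support) :
    ∃ (a b : V) (q : G.Walk a b), IsShortest G w q ∧
      (∀ x : V, (x ∈ c.support ∧ x ∈ c'.support) ↔ x ∈ q.support) ∧
      (∀ e : Sym2 V, (e ∈ c.edges ∧ e ∈ c'.edges) ↔ e ∈ q.edges) := by
  classical
  -- shortest paths between common vertices lie in both cycles
  have hP : ∀ u v : V, u ∈ c.support → u ∈ c'.support → v ∈ c.support → v ∈ c'.support →
      ∃ p : G.Walk u v, IsShortest G w p ∧ ∀ e ∈ p.edges, e ∈ c.edges ∧ e ∈ c'.edges := by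
    intro u v hu hu' hv hv'
    obtain ⟨p, hp, hpc⟩ := hiso u v hu hv
    obtain ⟨p', hp', hpc'⟩ := hiso' u v hu' hv'
    have := huniq u v p p' hp hp'
    subst this
    exact ⟨p, hp, fun e he => ⟨hpc e he, hpc' e he⟩⟩
  -- decompose c at e0 and build the path L
  obtain ⟨a0, b0, hab, w1, w2, he0, hcdec⟩ := edge_decomp c he0c
  set L : G.Walk b0 a0 := w2.append w1 with hL
  have hcsup : c.support = w1.support ++ w2.support := by
    rw [hcdec, Walk.support_append, Walk.support_cons, List.tail_cons]
  have hLsup : L.support = w2.support ++ w1.support.tail := Walk.support_append _ _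
  have hLpath : L.IsPath := by
    rw [Walk.isPath_def, hLsup]
    have h1 : c.support.tail = w1.support.tail ++ w2.support := by
      rw [hcsup, Walk.support_eq_cons w1]; rfl
    have h2 := hc.support_nodup
    rw [h1] at h2
    exact (List.perm_append_comm).nodup h2
  have hsupsub : ∀ x ∈ c.support, x ∈ L.support := by
    intro x hx
    rw [hcsup, List.mem_append] at hx
    rw [hLsup, List.mem_append]
    rcases hx with hx | hx
    · rw [Walk.support_eq_cons w1, List.mem_cons] at hx
      rcases hx with rfl | hx
      · exact Or.inl (Walk.end_mem_support w2)
      · exact Or.inr hx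
    · exact Or.inl hx
  have hEL : ∀ e, e ∈ c.edges → e ≠ e0 → e ∈ L.edges := by
    intro e he hne0
    rw [hcdec, Walk.edges_append, Walk.edges_cons, ← he0] at he
    rw [hL, Walk.edges_append, List.mem_append]
    rcases List.mem_append.1 he with h | h
    · exact Or.inr h
    · rcases List.mem_cons.1 h with h | h
      · exact absurd h hne0
      · exact Or.inl h
  -- the finite set of common vertices
  set T : Finset V := c.support.toFinset.filter (· ∈ c'.support) with hTdef
  have hT : ∀ x, x ∈ T ↔ (x ∈ c.support ∧ x ∈ c'.support) := by
    intro x; simp [hTdef]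
  obtain ⟨x0, hx0⟩ := hne
  have hTne : (T ×ˢ T).Nonempty := ⟨(x0, x0), by
    rw [Finset.mem_product]; exact ⟨(hT x0).2 hx0, (hT x0).2 hx0⟩⟩
  obtain ⟨⟨a, b⟩, habT, hmax⟩ := Finset.exists_max_image (T ×ˢ T)
    (fun p => ((L.support.idxOf p.1 : ℤ) - (L.support.idxOf p.2 : ℤ)).natAbs) hTne
  rw [Finset.mem_product, hT, hT] at habT
  obtain ⟨⟨haC, haC'⟩, hbC, hbC'⟩ := habT
  obtain ⟨q, hqshort, hqE⟩ := hP a b haC haC' hbC hbC'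
  have hqsupS : ∀ x ∈ q.support, x ∈ c.support ∧ x ∈ c'.support := by
    intro x hx
    rcases mem_support_start_or_edge q hx with rfl | ⟨e, he, hxe⟩
    · exact ⟨haC, haC'⟩
    · obtain ⟨h1, h2⟩ := hqE e he
      exact ⟨mem_walk_support_of_mem_edges c h1 hxe, mem_walk_support_of_mem_edges c' h2 hxe⟩
  have hqEL : ∀ e ∈ q.edges, e ∈ L.edges := by
    intro e he
    obtain ⟨h1, h2⟩ := hqE e he
    exact hEL e h1 (fun h => he0c' (h ▸ h2))
  have haL : a ∈ L.support := hsupsub a haC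
  obtain ⟨σ, hσ, hmono⟩ := walk_in_path L hLpath q hqshort.1 hqEL haL
  set ia : ℤ := (L.support.idxOf a : ℤ) with hia
  have hblen : (L.support.idxOf b : ℤ) = ia + σ * q.length := by
    have := (hmono q.length le_rfl).2
    rwa [Walk.getVert_length] at this
  -- index bound from maximality
  have hmax' : ∀ x, x ∈ c.support → x ∈ c'.support →
      (ia - L.support.idxOf x).natAbs ≤ ((ia - L.support.idxOf b)).natAbs ∧
      ((L.support.idxOf x : ℤ) - L.support.idxOf b).natAbs ≤ ((ia - L.support.idxOf b)).natAbs := by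
    intro x h1 h2
    have hxT : x ∈ T := (hT x).2 ⟨h1, h2⟩
    have haT : a ∈ T := (hT a).2 ⟨haC, haC'⟩
    have hbT : b ∈ T := (hT b).2 ⟨hbC, hbC'⟩
    constructor
    · exact hmax (a, x) (Finset.mem_product.2 ⟨haT, hxT⟩)
    · exact hmax (x, b) (Finset.mem_product.2 ⟨hxT, hbT⟩)
  -- coverage: every common vertex is some getVert of q
  have hcov : ∀ x, x ∈ c.support → x ∈ c'.support →
      ∃ i ≤ q.length, q.getVert i = x := by
    intro x h1 h2
    obtain ⟨hm1, hm2⟩ := hmax' x h1 h2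
    have hxL : x ∈ L.support := hsupsub x h1
    set ix : ℤ := (L.support.idxOf x : ℤ) with hix
    have hex : ∃ i : ℕ, i ≤ q.length ∧ ia + σ * i = ix := by
      rcases hσ with rfl | rfl
      · have h3 : ia ≤ ix ∧ ix ≤ ia + q.length := by
          rw [hblen] at hm1 hm2
          constructor <;> omega
        exact ⟨(ix - ia).toNat, by omega, by omega⟩
      · have h3 : ia - q.length ≤ ix ∧ ix ≤ ia := by
          rw [hblen] at hm1 hm2
          constructor <;> omega
        exact ⟨(ia - ix).toNat, by omega, by omega⟩
    obtain ⟨i, hi, hieq⟩ := hex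
    refine ⟨i, hi, ?_⟩
    obtain ⟨hzL, hz⟩ := hmono i hi
    have hzz : (L.support.idxOf (q.getVert i) : ℤ) = ix := by rw [hz, hieq]
    rw [hix] at hzz
    have hnat : L.support.idxOf (q.getVert i) = L.support.idxOf x := by exact_mod_cast hzz
    exact (List.idxOf_inj hzL).1 hnat
  refine ⟨a, b, q, hqshort, ?_, ?_⟩
  · intro x
    constructor
    · rintro ⟨h1, h2⟩
      obtain ⟨i, hi, rfl⟩ := hcov x h1 h2
      exact getVert_mem_support' q i hi
    · exact fun hx => hqsupS x hx
  · intro e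
    constructor
    · rintro ⟨h1, h2⟩
      induction e using Sym2.ind with
      | _ z1 z2 =>
        have hz1 : z1 ∈ c.support ∧ z1 ∈ c'.support :=
          ⟨c.fst_mem_support_of_mem_edges h1, c'.fst_mem_support_of_mem_edges h2⟩
        have hz2 : z2 ∈ c.support ∧ z2 ∈ c'.support :=
          ⟨c.snd_mem_support_of_mem_edges h1, c'.snd_mem_support_of_mem_edges h2⟩
        obtain ⟨i1, hi1, hg1⟩ := hcov z1 hz1.1 hz1.2
        obtain ⟨i2, hi2, hg2⟩ := hcov z2 hz2.1 hz2.2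
        -- e is an edge of L, so indexes of z1 z2 differ by 1
        have heL : s(z1, z2) ∈ L.edges := hEL _ h1 (fun h => he0c' (h ▸ h2))
        obtain ⟨k, hk, hke⟩ := (mem_edges_iff_getVert L _).1 heL
        rw [Sym2.eq_iff] at hke
        have hidx : ((L.support.idxOf z1 : ℤ) - L.support.idxOf z2).natAbs = 1 := by
          rcases hke with ⟨hz1', hz2'⟩ | ⟨hz1', hz2'⟩ <;>
            rw [hz1', hz2', indexOf_getVert L hLpath k (by omega),
              indexOf_getVert L hLpath (k+1) (by omega)] <;> simp
        have hii1 := (hmono i1 hi1).2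
        have hii2 := (hmono i2 hi2).2
        rw [hg1] at hii1
        rw [hg2] at hii2
        have hdiff : (i1 - i2 : ℤ).natAbs = 1 := by
          rcases hσ with rfl | rfl <;> omega
        rw [mem_edges_iff_getVert q]
        rcases Int.natAbs_eq_iff.1 hdiff with hd | hd
        · -- i1 = i2 + 1
          have : i1 = i2 + 1 := by omega
          subst this
          exact ⟨i2, by omega, by rw [hg2, hg1, Sym2.eq_swap]⟩
        · have : i2 = i1 + 1 := by omega
          subst this
          exact ⟨i1, by omega, by rw [hg1, hg2]⟩
    · exact fun he => hqE e he


end Aux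

/-- In a graph with unique shortest paths, the intersection of two distinct isometric
cycles `C` and `C'` (common vertices and common edges) is either empty or a single
shortest path. -/
theorem isometric_cycles_inter
    {V : Type*} (G : SimpleGraph V) (w : Sym2 V → ℝ)
    (hw : ∀ e, 0 ≤ w e)
    (huniq : UniqueShortestPaths G w)
    {r r' : V} (c : G.Walk r r) (c' : G.Walk r' r')
    (hc : c.IsCycle) (hc' : c'.IsCycle)
    (hiso : IsIsometric G w c) (hiso' : IsIsometric G w c')
    (hdistinct : {e : Sym2 V | e ∈ c.edges} ≠ {e : Sym2 V | e ∈ c'.edges}) :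
    (∀ x : V, ¬(x ∈ c.support ∧ x ∈ c'.support)) ∨
    ∃ (a b : V) (q : G.Walk a b), IsShortest G w q ∧
      (∀ x : V, (x ∈ c.support ∧ x ∈ c'.support) ↔ x ∈ q.support) ∧
      (∀ e : Sym2 V, (e ∈ c.edges ∧ e ∈ c'.edges) ↔ e ∈ q.edges) := by
  by_cases hS : ∃ x, x ∈ c.support ∧ x ∈ c'.support
  · right
    have hed : ∃ e, (e ∈ c.edges ∧ e ∉ c'.edges) ∨ (e ∈ c'.edges ∧ e ∉ c.edges) := by
      by_contra h
      push_neg at h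
      apply hdistinct
      ext e
      have := h e
      simp only [Set.mem_setOf_eq]
      tauto
    obtain ⟨e0, he⟩ := hed
    rcases he with ⟨h1, h2⟩ | ⟨h1, h2⟩
    · exact key G w huniq c c' hc hc' hiso hiso' h1 h2 hS
    · obtain ⟨x, hx1, hx2⟩ := hS
      obtain ⟨a, b, q, h3, h4, h5⟩ := key G w huniq c' c hc' hc hiso' hiso h1 h2 ⟨x, hx2, hx1⟩
      exact ⟨a, b, q, h3, fun x => (and_comm.trans (h4 x)), fun e => (and_comm.trans (h5 e))⟩
  · left
    intro x hx
    exact hS ⟨x, hx⟩
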